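/- Let R be a commutative ring and let F ∈ R[X] be monic of degree N ≥ 1 such that the constant coefficient F.coeff 0 is a unit of R. Let C be an ideal of R[X] with F ∈ C. Then for every g ∈ R[X]: ((g * h) %ₘ F).coeff 0 = 0 for all h ∈ C if and only if F divides g * h for all h ∈ C. (That is, the ⊥₀-dual of the polycyclic code C ⊆ R[X]/⟨F⟩ equals the annihilator of C; in particular the ⊥₀-dual is an ideal, i.e., again a polycyclic code.) -/

import Mathlib

open Polynomial

private lemma mul_modByMonic_left {R : Type*} [CommRing R] (F p q : R[X]) (hF : F.Monic) :
    (p * (q %ₘ F)) %ₘ F = (p * q) %ₘ F := by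
  conv_rhs => rw [← modByMonic_add_div q F]
  rw [mul_add, add_modByMonic, mul_left_comm, self_mul_modByMonic hF, add_zero]

private lemma coeff_zero_X_mul_modByMonic {R : Type*} [CommRing R] (F s : R[X]) (hF : F.Monic)
    (hN : 1 ≤ F.natDegree) (hs : s.degree < F.degree) :
    ((X * s) %ₘ F).coeff 0 = -(s.coeff (F.natDegree - 1) * F.coeff 0) := by
  nontriviality R
  set a := s.coeff (F.natDegree - 1) with ha
  have hsnd : s.natDegree < F.natDegree := by
    rcases eq_or_ne s 0 with rfl | hs0
    · simpa using Nat.lt_of_lt_of_le Nat.zero_lt_one hN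
    · rw [degree_eq_natDegree hs0, degree_eq_natDegree hF.ne_zero] at hs
      exact_mod_cast hs
  have key : (X * s) %ₘ F = X * s - C a * F := by
    have h1 : (X * s - C a * F) %ₘ F = (X * s) %ₘ F := by
      rw [sub_modByMonic, mul_comm (C a) F, self_mul_modByMonic hF, sub_zero]
    rw [← h1, modByMonic_eq_self_iff hF, degree_eq_natDegree hF.ne_zero,
      degree_lt_iff_coeff_zero]
    intro m hm
    rcases eq_or_lt_of_le hm with h | h
    · have hm1 : m = (F.natDegree - 1) + 1 := by omega
      rw [coeff_sub, hm1, coeff_X_mul, coeff_C_mul, ← hm1, ← h, hF.coeff_natDegree, mul_one,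
        ← ha]
      exact sub_self a
    · rw [coeff_sub, coeff_C_mul, coeff_eq_zero_of_natDegree_lt h, mul_zero, sub_zero]
      rcases Nat.exists_eq_add_of_lt h with ⟨k, hk⟩
      rw [hk, coeff_X_mul]
      exact coeff_eq_zero_of_natDegree_lt (by omega)
  rw [key, coeff_sub, coeff_C_mul]
  simp

/-- For a monic `F` of degree `≥ 1` with unit constant coefficient and an ideal
`C` of `R[X]` containing `F`, a polynomial `g` lies in the `⊥₀`-dual of `C`
(i.e. `((g * h) %ₘ F).coeff 0 = 0` for all `h ∈ C`) iff `g` annihilates `C`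
modulo `F` (i.e. `F ∣ g * h` for all `h ∈ C`). -/
theorem perp0_dual_eq_annihilator {R : Type*} [CommRing R] (F : R[X])
    (hF : F.Monic) (hN : 1 ≤ F.natDegree) (h0 : IsUnit (F.coeff 0))
    (C : Ideal R[X]) (hFC : F ∈ C) (g : R[X]) :
    (∀ h ∈ C, ((g * h) %ₘ F).coeff 0 = 0) ↔ (∀ h ∈ C, F ∣ g * h) := by
  constructor
  · intro hperp h hh
    rcases subsingleton_or_nontrivial R with hR | hR
    · exact ⟨0, Subsingleton.elim _ _⟩
    rw [← modByMonic_eq_zero_iff_dvd hF]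
    set r := (g * h) %ₘ F with hr
    set N := F.natDegree with hNdef
    have hrdeg : r.degree < F.degree := degree_modByMonic_lt _ hF
    have hFdeg : F.degree = (N : ℕ) := degree_eq_natDegree hF.ne_zero
    have hrN : ∀ i, N ≤ i → r.coeff i = 0 := by
      intro i hi
      apply coeff_eq_zero_of_degree_lt
      calc r.degree < F.degree := hrdeg
        _ = (N : ℕ) := hFdeg
        _ ≤ (i : ℕ) := by exact_mod_cast hi
    have main : ∀ j : ℕ, ∀ i, N - j ≤ i → r.coeff i = 0 := by
      intro j
      induction j with
      | zero => intro i hi; exact hrN i (by omega)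
      | succ j ih =>
        intro i hi
        rcases le_or_gt (N - j) i with h' | h'
        · exact ih i h'
        have hiN : i < N := by omega
        set s := X ^ (N - 1 - i) * r with hs
        have hsdeg : s.degree < F.degree := by
          rcases eq_or_ne r 0 with h0' | hr0
          · rw [hs, h0', mul_zero]
            simp only [degree_zero]
            exact bot_lt_iff_ne_bot.mpr (fun hc => hF.ne_zero (degree_eq_bot.mp hc))
          have hrd3 : r.natDegree ≤ i := by
            by_contra hc
            push_neg at hc
            have := ih r.natDegree (by omega)
            exact hr0 (leadingCoeff_eq_zero.mp this)
          refine lt_of_le_of_lt (degree_mul_le _ _) ?_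
          rw [degree_X_pow, degree_eq_natDegree hr0, hFdeg, ← Nat.cast_add]
          exact_mod_cast (by omega : (N - 1 - i) + r.natDegree < N)
        have hXh : X ^ (N - i) * h ∈ C := C.mul_mem_left _ hh
        have hcoeff := hperp _ hXh
        have e1 : g * (X ^ (N - i) * h) = X ^ (N - i) * (g * h) := by ring
        have e2 : (X ^ (N - i) * (g * h)) %ₘ F = (X * s) %ₘ F := by
          rw [← mul_modByMonic_left F (X ^ (N - i)) (g * h) hF, ← hr, hs]
          congr 1
          rw [← mul_assoc, ← pow_succ']
          congr 2
          omega
        rw [e1, e2, coeff_zero_X_mul_modByMonic F s hF hN hsdeg] at hcoeff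
        have hsc : s.coeff (N - 1) = r.coeff i := by
          rw [hs, coeff_X_pow_mul', if_pos (by omega : N - 1 - i ≤ N - 1)]
          congr 1
          omega
        rw [hsc, neg_eq_zero] at hcoeff
        exact (isUnit_iff_exists_inv.mp h0).elim fun u hu => by
          have := congrArg (· * u) hcoeff
          simpa [mul_assoc, hu] using this
    have hr0 : r = 0 := by
      ext i
      simpa using main N i (by omega)
    exact hr0
  · intro hann h hh
    rw [(modByMonic_eq_zero_iff_dvd hF).mpr (hann h hh)]
    simp
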